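/- Every one-dimensional central extension of F_n^1 given by the cocycle data (α_1, α_2, α_3, α_4) with α_2 = 0 and α_1 ≠ 0, α_4 = 0 (multiplication: [e_i,e_1]=e_{i+1} for 1 ≤ i ≤ n-2, [e_n,e_1] = e_2 + α_1 e_{n+1}, [e_1,e_n] = α_3 e_{n+1}) is isomorphic to the algebra L_{n+1}^{3,λ} for some λ ∈ {-1,0,1}, where L_m^{3,λ} has products [e_i,e_1]=e_{i+1} (1 ≤ i ≤ m-3), [e_{m-1},e_1]=e_m+e_2, [e_1,e_{m-1}]=λ e_m. -/

import Mathlib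

/-- The `(n+1)`-dimensional algebra `E(α_1,α_3)` with products
`[e_i,e_1]=e_{i+1}` for `1 ≤ i ≤ n-2`, `[e_n,e_1]=e_2+α_1 e_{n+1}`,
`[e_1,e_n]=α_3 e_{n+1}`, other products zero.  Note `E(1,λ) = L_{n+1}^{3,λ}`. -/
def Emul (n : ℕ) (hn : 4 ≤ n) (α1 α3 : ℂ) (x y : Fin (n+1) → ℂ) :
    Fin (n+1) → ℂ :=
  fun k =>
    if h : (k : ℕ) = 1 then
      x ⟨0, by omega⟩ * y ⟨0, by omega⟩ + x ⟨n - 1, by omega⟩ * y ⟨0, by omega⟩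
    else if h2 : 2 ≤ (k : ℕ) ∧ (k : ℕ) ≤ n - 2 then
      x ⟨(k : ℕ) - 1, by have := k.isLt; omega⟩ * y ⟨0, by omega⟩
    else if h3 : (k : ℕ) = n then
      α1 * (x ⟨n - 1, by omega⟩ * y ⟨0, by omega⟩) +
        α3 * (x ⟨0, by omega⟩ * y ⟨n - 1, by omega⟩)
    else 0

def gfun (n : ℕ) (hn : 4 ≤ n) (a s b c d : ℂ) (x : Fin (n+1) → ℂ) : Fin (n+1) → ℂ :=
  fun k =>
    if (k : ℕ) = 0 then a * x k
    else if (k : ℕ) ≤ n - 2 then a ^ (k:ℕ) * s * x k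
    else if (k : ℕ) = n - 1 then b * x ⟨0, by omega⟩ + s * x k
    else c * x ⟨1, by omega⟩ + d * x k

section Aux

variable {n : ℕ} (hn : 4 ≤ n) (α1 α3 : ℂ)

lemma Emul_at1 (x y : Fin (n+1) → ℂ) (k : Fin (n+1)) (h : (k:ℕ) = 1) :
    Emul n hn α1 α3 x y k =
      x ⟨0, by omega⟩ * y ⟨0, by omega⟩ + x ⟨n-1, by omega⟩ * y ⟨0, by omega⟩ := by
  simp only [Emul]; rw [dif_pos h]

lemma Emul_mid (x y : Fin (n+1) → ℂ) (k : Fin (n+1)) (h2 : 2 ≤ (k:ℕ)) (h3 : (k:ℕ) ≤ n-2) :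
    Emul n hn α1 α3 x y k =
      x ⟨(k:ℕ)-1, by have := k.isLt; omega⟩ * y ⟨0, by omega⟩ := by
  simp only [Emul]; rw [dif_neg (by omega), dif_pos ⟨h2, h3⟩]

lemma Emul_atn (x y : Fin (n+1) → ℂ) (k : Fin (n+1)) (h : (k:ℕ) = n) :
    Emul n hn α1 α3 x y k =
      α1 * (x ⟨n-1, by omega⟩ * y ⟨0, by omega⟩) +
        α3 * (x ⟨0, by omega⟩ * y ⟨n-1, by omega⟩) := by
  simp only [Emul]; rw [dif_neg (by omega), dif_neg (by omega), dif_pos h]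

lemma Emul_zero (x y : Fin (n+1) → ℂ) (k : Fin (n+1))
    (h : (k:ℕ) = 0 ∨ (k:ℕ) = n-1) :
    Emul n hn α1 α3 x y k = 0 := by
  simp only [Emul]
  rw [dif_neg (by omega), dif_neg (by omega), dif_neg (by omega)]

variable (a s b c d : ℂ)

lemma gfun_at0 (x : Fin (n+1) → ℂ) (k : Fin (n+1)) (h : (k:ℕ) = 0) :
    gfun n hn a s b c d x k = a * x k := by
  simp only [gfun]; rw [if_pos h]

lemma gfun_mid (x : Fin (n+1) → ℂ) (k : Fin (n+1)) (h1 : (k:ℕ) ≠ 0) (h2 : (k:ℕ) ≤ n-2) :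
    gfun n hn a s b c d x k = a ^ (k:ℕ) * s * x k := by
  simp only [gfun]; rw [if_neg h1, if_pos h2]

lemma gfun_pen (x : Fin (n+1) → ℂ) (k : Fin (n+1)) (h : (k:ℕ) = n-1) :
    gfun n hn a s b c d x k = b * x ⟨0, by omega⟩ + s * x k := by
  simp only [gfun]; rw [if_neg (by omega), if_neg (by omega), if_pos h]

lemma gfun_top (x : Fin (n+1) → ℂ) (k : Fin (n+1)) (h : (k:ℕ) = n) :
    gfun n hn a s b c d x k = c * x ⟨1, by omega⟩ + d * x k := by
  simp only [gfun]; rw [if_neg (by omega), if_neg (by omega), if_neg (by omega)]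

lemma gfun_mul (a b lam : ℂ) (hkey : lam * (a*α1 - b*α3) = (a+b)*α3)
    (x y : Fin (n+1) → ℂ) :
    gfun n hn a (a+b) b (a*b*(α1+α3)) (a*(a*α1-b*α3)) (Emul n hn 1 lam x y)
      = Emul n hn α1 α3 (gfun n hn a (a+b) b (a*b*(α1+α3)) (a*(a*α1-b*α3)) x)
          (gfun n hn a (a+b) b (a*b*(α1+α3)) (a*(a*α1-b*α3)) y) := by
  funext k
  by_cases h0 : (k:ℕ) = 0
  · rw [gfun_at0 hn _ _ _ _ _ _ _ h0, Emul_zero hn 1 lam x y k (Or.inl h0),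
      Emul_zero hn α1 α3 _ _ k (Or.inl h0)]
    ring
  · by_cases h1 : (k:ℕ) = 1
    · rw [gfun_mid hn _ _ _ _ _ _ _ h0 (by omega), Emul_at1 hn 1 lam x y k h1,
        Emul_at1 hn α1 α3 _ _ k h1,
        gfun_at0 hn a (a+b) b _ _ x ⟨0, by omega⟩ rfl,
        gfun_at0 hn a (a+b) b _ _ y ⟨0, by omega⟩ rfl,
        gfun_pen hn a (a+b) b _ _ x ⟨n-1, by omega⟩ rfl, h1]
      ring
    · by_cases hm : (k:ℕ) ≤ n-2
      · have h2 : 2 ≤ (k:ℕ) := by omega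
        rw [gfun_mid hn _ _ _ _ _ _ _ h0 hm, Emul_mid hn 1 lam x y k h2 hm,
          Emul_mid hn α1 α3 _ _ k h2 hm,
          gfun_at0 hn a (a+b) b _ _ y ⟨0, by omega⟩ rfl,
          gfun_mid hn a (a+b) b _ _ x ⟨(k:ℕ)-1, by have := k.isLt; omega⟩
            (by simp; omega) (by simp; omega),
          show a^(k:ℕ) = a^((k:ℕ)-1)*a from by rw [← pow_succ]; congr 1; omega]
        ring
      · by_cases hp : (k:ℕ) = n-1
        · rw [gfun_pen hn _ _ _ _ _ _ _ hp,
            Emul_zero hn 1 lam x y ⟨0, by omega⟩ (Or.inl rfl),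
            Emul_zero hn 1 lam x y k (Or.inr hp),
            Emul_zero hn α1 α3 _ _ k (Or.inr hp)]
          ring
        · have ht : (k:ℕ) = n := by have := k.isLt; omega
          rw [gfun_top hn _ _ _ _ _ _ _ ht,
            Emul_at1 hn 1 lam x y ⟨1, by omega⟩ rfl,
            Emul_atn hn 1 lam x y k ht,
            Emul_atn hn α1 α3 _ _ k ht,
            gfun_pen hn a (a+b) b _ _ x ⟨n-1, by omega⟩ rfl,
            gfun_at0 hn a (a+b) b _ _ y ⟨0, by omega⟩ rfl,
            gfun_at0 hn a (a+b) b _ _ x ⟨0, by omega⟩ rfl,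
            gfun_pen hn a (a+b) b _ _ y ⟨n-1, by omega⟩ rfl]
          linear_combination (a * (x ⟨0, by omega⟩ * y ⟨n-1, by omega⟩)) * hkey


lemma gfun_linv (ha : a ≠ 0) (hs : s ≠ 0) (hd : d ≠ 0) (x : Fin (n+1) → ℂ) :
    gfun n hn a⁻¹ s⁻¹ (-(b/(a*s))) (-(c/(a*s*d))) d⁻¹ (gfun n hn a s b c d x) = x := by
  funext k
  by_cases h0 : (k:ℕ) = 0
  · rw [gfun_at0 hn _ _ _ _ _ _ _ h0, gfun_at0 hn _ _ _ _ _ _ _ h0]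
    field_simp
  · by_cases h2 : (k:ℕ) ≤ n-2
    · rw [gfun_mid hn _ _ _ _ _ _ _ h0 h2, gfun_mid hn _ _ _ _ _ _ _ h0 h2, inv_pow]
      field_simp
    · by_cases h3 : (k:ℕ) = n-1
      · rw [gfun_pen hn _ _ _ _ _ _ _ h3, gfun_pen hn _ _ _ _ _ _ _ h3,
          gfun_at0 hn a s b c d _ _ (by simp)]
        field_simp; ring
      · have h4 : (k:ℕ) = n := by have := k.isLt; omega
        rw [gfun_top hn _ _ _ _ _ _ _ h4, gfun_top hn _ _ _ _ _ _ _ h4,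
          gfun_mid hn a s b c d _ _ (by simp) (by simp; omega)]
        field_simp; ring

lemma gfun_rinv (ha : a ≠ 0) (hs : s ≠ 0) (hd : d ≠ 0) (x : Fin (n+1) → ℂ) :
    gfun n hn a s b c d (gfun n hn a⁻¹ s⁻¹ (-(b/(a*s))) (-(c/(a*s*d))) d⁻¹ x) = x := by
  funext k
  by_cases h0 : (k:ℕ) = 0
  · rw [gfun_at0 hn _ _ _ _ _ _ _ h0, gfun_at0 hn _ _ _ _ _ _ _ h0]
    field_simp
  · by_cases h2 : (k:ℕ) ≤ n-2
    · rw [gfun_mid hn _ _ _ _ _ _ _ h0 h2, gfun_mid hn _ _ _ _ _ _ _ h0 h2, inv_pow]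
      field_simp
    · by_cases h3 : (k:ℕ) = n-1
      · rw [gfun_pen hn _ _ _ _ _ _ _ h3, gfun_pen hn _ _ _ _ _ _ _ h3,
          gfun_at0 hn a⁻¹ s⁻¹ _ _ _ _ _ (by simp)]
        field_simp; ring
      · have h4 : (k:ℕ) = n := by have := k.isLt; omega
        rw [gfun_top hn _ _ _ _ _ _ _ h4, gfun_top hn _ _ _ _ _ _ _ h4,
          gfun_mid hn a⁻¹ s⁻¹ _ _ _ _ _ (by simp) (by simp; omega)]
        field_simp; ring_nf; field_simp; ring

noncomputable def gequiv (ha : a ≠ 0) (hs : s ≠ 0) (hd : d ≠ 0) :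
    (Fin (n+1) → ℂ) ≃ₗ[ℂ] (Fin (n+1) → ℂ) :=
  { toFun := gfun n hn a s b c d
    map_add' := fun x y => by
      funext k; simp only [gfun, Pi.add_apply]; split_ifs <;> ring
    map_smul' := fun r x => by
      funext k
      simp only [gfun, Pi.smul_apply, smul_eq_mul, RingHom.id_apply]
      split_ifs <;> ring
    invFun := gfun n hn a⁻¹ s⁻¹ (-(b/(a*s))) (-(c/(a*s*d))) d⁻¹
    left_inv := gfun_linv hn a s b c d ha hs hd
    right_inv := gfun_rinv hn a s b c d ha hs hd }

lemma gequiv_apply (ha : a ≠ 0) (hs : s ≠ 0) (hd : d ≠ 0) (x : Fin (n+1) → ℂ) :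
    gequiv hn a s b c d ha hs hd x = gfun n hn a s b c d x := rfl

end Aux

/-- Every one-dimensional central extension of `F_n^1` with cocycle data
`α_2 = 0`, `α_1 ≠ 0`, `α_4 = 0` is isomorphic to `L_{n+1}^{3,λ}` for some
`λ ∈ {-1,0,1}`. -/
theorem ext_iso_L3 (n : ℕ) (hn : 4 ≤ n) (α1 α3 : ℂ) (hα1 : α1 ≠ 0) :
    ∃ lam ∈ ({-1, 0, 1} : Set ℂ),
      ∃ f : (Fin (n+1) → ℂ) ≃ₗ[ℂ] (Fin (n+1) → ℂ),
        ∀ x y, f (Emul n hn α1 α3 x y) = Emul n hn 1 lam (f x) (f y) := by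
  obtain ⟨a, b, lam, hmem, ha, hs, hd, hkey⟩ :
      ∃ a b lam : ℂ, lam ∈ ({-1,0,1} : Set ℂ) ∧ a ≠ 0 ∧ a + b ≠ 0 ∧
        a*(a*α1-b*α3) ≠ 0 ∧ lam*(a*α1-b*α3) = (a+b)*α3 := by
    by_cases h3 : α3 = 0
    · exact ⟨1, 0, 0, by simp, one_ne_zero, by norm_num,
        by simpa [h3] using hα1, by rw [h3]; ring⟩
    · by_cases hsum : α1 + α3 = 0
      · exact ⟨1, 0, -1, by simp, one_ne_zero, by norm_num,
          by simpa using hα1, by linear_combination -hsum⟩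
      · refine ⟨1, (α1-α3)/(2*α3), 1, by simp, one_ne_zero, ?_, ?_, ?_⟩
        · intro h
          apply hsum
          field_simp at h
          linear_combination h
        · intro h
          field_simp at h
          have h' : α3 * (α1 + α3) = 0 := by linear_combination α3 * h
          rcases mul_eq_zero.mp h' with h'' | h''
          · exact h3 h''
          · exact hsum h''
        · field_simp
          ring
  set G := gequiv hn a (a+b) b (a*b*(α1+α3)) (a*(a*α1-b*α3)) ha hs hd with hG
  refine ⟨lam, hmem, G.symm, fun x y => ?_⟩
  have hmul : ∀ u v, G (Emul n hn 1 lam u v) = Emul n hn α1 α3 (G u) (G v) :=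
    fun u v => gfun_mul hn α1 α3 a b lam hkey u v
  have h1 := hmul (G.symm x) (G.symm y)
  rw [G.apply_symm_apply, G.apply_symm_apply] at h1
  rw [← h1, G.symm_apply_apply]
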